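/- For any nontrivial tree T with maximum degree Δ(T), γ^t_StR(T) ≥ γ_t(T) + ⌈(Δ(T)−1)/2⌉. -/
import Mathlib


open Finset
set_option linter.unusedSectionVars false
set_option maxHeartbeats 1000000

variable {V : Type*} [Fintype V]

/-- The degree of a vertex. -/
noncomputable def degN (G : SimpleGraph V) (v : V) : ℕ := {u | G.Adj v u}.ncard

/-- Maximum degree. -/
noncomputable def maxDeg (G : SimpleGraph V) : ℕ := Finset.univ.sup (degN G)

/-- Minimum degree. -/
noncomputable def minDeg (G : SimpleGraph V) : ℕ := sInf {d | ∃ v, degN G v = d}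

/-- No isolated vertex. -/
def NoIsolated (G : SimpleGraph V) : Prop := ∀ v, ∃ u, G.Adj v u

/-- Total strong Roman dominating function. `(Δ+1)/2 = ⌈Δ/2⌉` and
`(m+1)/2 = ⌈m/2⌉` in natural-number arithmetic. -/
def IsTSRDF (G : SimpleGraph V) (f : V → ℕ) : Prop :=
  (∀ v, f v ≤ (maxDeg G + 1) / 2 + 1) ∧
  (∀ v, f v = 0 → ∃ u, G.Adj v u ∧
      1 + ({w | G.Adj u w ∧ f w = 0}.ncard + 1) / 2 ≤ f u) ∧
  (∀ v, 0 < f v → ∃ u, G.Adj v u ∧ 0 < f u)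

/-- The total strong Roman domination number. -/
noncomputable def tsrd (G : SimpleGraph V) : ℕ :=
  sInf {k | ∃ f : V → ℕ, IsTSRDF G f ∧ ∑ v, f v = k}

/-- Total dominating set. -/
def IsTDS (G : SimpleGraph V) (S : Finset V) : Prop := ∀ v, ∃ u ∈ S, G.Adj v u

/-- Total domination number. -/
noncomputable def td (G : SimpleGraph V) : ℕ :=
  sInf {k | ∃ S : Finset V, IsTDS G S ∧ S.card = k}


lemma ncard_adj (p : V → Prop) [DecidablePred p] :
    {u | p u}.ncard = (univ.filter p).card := by
  have : {u | p u} = ↑(univ.filter p) := by ext x; simp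
  rw [this, Set.ncard_coe_finset]

lemma no_tri {G : SimpleGraph V} (hac : G.IsAcyclic) {a b c : V}
    (h1 : G.Adj a b) (h2 : G.Adj b c) (h3 : G.Adj a c) : False := by
  rw [SimpleGraph.isAcyclic_iff_path_unique] at hac
  have hq : (SimpleGraph.Walk.cons h1 ((SimpleGraph.Walk.cons h2 SimpleGraph.Walk.nil))).IsPath := by
    simp [SimpleGraph.Walk.isPath_def, h1.ne, h2.ne, h3.ne]
  have := hac (SimpleGraph.Path.singleton h3) ⟨_, hq⟩
  have hl := congrArg (fun p => p.1.length) this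
  simp [SimpleGraph.Path.singleton] at hl

lemma no_c4 {G : SimpleGraph V} (hac : G.IsAcyclic) {a b x y : V} (hxy : x ≠ y)
    (hab : a ≠ b) (h1 : G.Adj x a) (h2 : G.Adj y a) (h3 : G.Adj x b) (h4 : G.Adj y b) :
    False := by
  rw [SimpleGraph.isAcyclic_iff_path_unique] at hac
  have hp : (SimpleGraph.Walk.cons h1.symm ((SimpleGraph.Walk.cons h3 SimpleGraph.Walk.nil))).IsPath := by
    simp [SimpleGraph.Walk.isPath_def, h1.ne', hab, h3.ne]
  have hq : (SimpleGraph.Walk.cons h2.symm ((SimpleGraph.Walk.cons h4 SimpleGraph.Walk.nil))).IsPath := by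
    simp [SimpleGraph.Walk.isPath_def, h2.ne', hab, h4.ne]
  have := hac ⟨_, hp⟩ ⟨_, hq⟩
  have hs := congrArg (fun p => p.1.support) this
  simp [SimpleGraph.Walk.support] at hs
  exact hxy hs

lemma exists_adj {G : SimpleGraph V} (hc : G.Connected) (hn : 2 ≤ Fintype.card V) (v : V) :
    ∃ w, G.Adj v w := by
  obtain ⟨w, hw⟩ := Fintype.exists_ne_of_one_lt_card (by omega) v
  obtain ⟨p⟩ := hc.preconnected v w
  cases p with
  | nil => exact absurd rfl hw
  | cons h _ => exact ⟨_, h⟩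

lemma main (G : SimpleGraph V) (ht : G.IsTree) (hn : 2 ≤ Fintype.card V)
    (f : V → ℕ) (hf : IsTSRDF G f) :
    ∃ D : Finset V, IsTDS G D ∧ D.card + maxDeg G / 2 ≤ ∑ v, f v := by
  classical
  obtain ⟨hb, hdef, hpos⟩ := hf
  have hac := ht.IsAcyclic
  have hconn := ht.isConnected
  have : Nonempty V := by
    have : 0 < Fintype.card V := by omega
    exact Fintype.card_pos_iff.mp this
  obtain ⟨u, -, hu⟩ := Finset.exists_mem_eq_sup univ univ_nonempty (degN G)
  set NB : Finset V := univ.filter (fun w => G.Adj u w) with hNB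
  set S : Finset V := univ.filter (fun v => 0 < f v) with hS
  set Z : Finset V := NB.filter (fun w => f w = 0) with hZ
  set P : Finset V := NB.filter (fun w => 0 < f w) with hP
  set P2 : Finset V := P.filter (fun w => 2 ≤ f w) with hP2
  set P1 : Finset V := P.filter (fun w => f w = 1) with hP1
  -- membership facts
  have hNBmem : ∀ w, w ∈ NB ↔ G.Adj u w := by intro w; simp [hNB]
  have hSmem : ∀ w, w ∈ S ↔ 0 < f w := by intro w; simp [hS]
  have huNB : u ∉ NB := by simp [hNBmem]
  -- geometry
  have hadj_two : ∀ v, v ≠ u → ∀ a b, a ∈ NB → b ∈ NB → G.Adj v a → G.Adj v b → a = b := by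
    intro v hv a b ha hb h1 h2
    by_contra hab
    exact no_c4 hac (Ne.symm hv) hab ((hNBmem a).mp ha) h1 ((hNBmem b).mp hb) h2
  have hnbr_nbr : ∀ v a, v ∈ NB → a ∈ NB → ¬ G.Adj v a := by
    intro v a hv ha h
    exact no_tri hac ((hNBmem v).mp hv) h ((hNBmem a).mp ha)
  -- zero-neighbor count
  set zc : V → ℕ := fun w => (univ.filter (fun w' => G.Adj w w' ∧ f w' = 0)).card with hzc
  have hdef' : ∀ a, f a = 0 → ∃ w, G.Adj a w ∧ 1 + (zc w + 1) / 2 ≤ f w := by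
    intro a ha
    obtain ⟨w, hw1, hw2⟩ := hdef a ha
    refine ⟨w, hw1, ?_⟩
    rwa [ncard_adj] at hw2
  set df : V → V := fun a => if h : f a = 0 then (hdef' a h).choose else a with hdfdef
  have hdf : ∀ a, f a = 0 → G.Adj a (df a) ∧ 1 + (zc (df a) + 1) / 2 ≤ f (df a) := by
    intro a ha
    simp only [hdfdef, dif_pos ha]
    exact (hdef' a ha).choose_spec
  have hdf2 : ∀ a, f a = 0 → 2 ≤ f (df a) := by
    intro a ha
    obtain ⟨h1, h2⟩ := hdf a ha
    have hmem : a ∈ univ.filter (fun w' => G.Adj (df a) w' ∧ f w' = 0) := by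
      simp [h1.symm, ha]
    have : 1 ≤ zc (df a) := Finset.card_pos.mpr ⟨a, hmem⟩
    omega
  -- forced predicate and witnesses
  set Fo : V → Prop := fun x => ∃ v, v ≠ u ∧ G.Adj x v ∧ ∀ w, G.Adj v w → 0 < f w → w = x
    with hFo
  set K : Finset V := P1.filter Fo with hK
  set vx : V → V := fun x => if h : Fo x then h.choose else x with hvxdef
  have hvx : ∀ x, Fo x → vx x ≠ u ∧ G.Adj x (vx x) ∧
      (∀ w, G.Adj (vx x) w → 0 < f w → w = x) := by
    intro x hx
    simp only [hvxdef, dif_pos hx]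
    exact hx.choose_spec
  have hKFo : ∀ x ∈ K, Fo x := by intro x hx; exact (Finset.mem_filter.mp hx).2
  have hK1f : ∀ x ∈ K, f x = 1 := by
    intro x hx
    have := (Finset.mem_filter.mp hx).1
    exact (Finset.mem_filter.mp this).2
  have hKNB : ∀ x ∈ K, x ∈ NB := by
    intro x hx
    exact (Finset.mem_filter.mp (Finset.mem_filter.mp (Finset.mem_filter.mp hx).1).1).1
  -- witness is positive
  have hvxS : ∀ x ∈ K, 0 < f (vx x) := by
    intro x hx
    by_contra h
    have hv0 : f (vx x) = 0 := by omega
    obtain ⟨hne, hadj, hprop⟩ := hvx x (hKFo x hx)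
    have h2 := hdf2 (vx x) hv0
    have h1 := (hdf (vx x) hv0).1
    have := hprop (df (vx x)) h1 (by omega)
    rw [this] at h2
    have := hK1f x hx
    omega
  -- witness not a neighbor of u
  have hvxNB : ∀ x ∈ K, vx x ∉ NB := by
    intro x hx hmem
    obtain ⟨hne, hadj, hprop⟩ := hvx x (hKFo x hx)
    exact hnbr_nbr x (vx x) (hKNB x hx) hmem hadj
  -- vx injective on K
  have hvxinj : ∀ x ∈ K, ∀ y ∈ K, vx x = vx y → x = y := by
    intro x hx y hy hxy
    obtain ⟨hne, hadj, hprop⟩ := hvx x (hKFo x hx)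
    obtain ⟨hne', hadj', hprop'⟩ := hvx y (hKFo y hy)
    rw [hxy] at hadj
    exact hadj_two (vx y) hne' x y (hKNB x hx) (hKNB y hy) hadj.symm hadj'.symm
  set K2 : Finset V := K.filter (fun x => 2 ≤ f (vx x)) with hK2
  set K1 : Finset V := K \ K2 with hK1
  set W1 : Finset V := K1.image vx with hW1
  set g : V → ℕ := fun v => f v - 1 with hg
  -- PART A : surplus lower bound
  have hT1 : Z.card ≤ 2 * ∑ w ∈ Z.image df, g w := by
    rw [Finset.card_eq_sum_card_image df Z, Finset.mul_sum]
    refine Finset.sum_le_sum ?_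
    intro w hw
    obtain ⟨a, ha, hda⟩ := Finset.mem_image.mp hw
    have ha0 : f a = 0 := (Finset.mem_filter.mp ha).2
    have hfw : 1 + (zc w + 1) / 2 ≤ f w := by
      have := (hdf a ha0).2; rwa [hda] at this
    have hsub : Z.filter (fun b => df b = w) ⊆
        univ.filter (fun w' => G.Adj w w' ∧ f w' = 0) := by
      intro b hb
      obtain ⟨hbZ, hbw⟩ := Finset.mem_filter.mp hb
      have hb0 : f b = 0 := (Finset.mem_filter.mp hbZ).2
      have := (hdf b hb0).1
      rw [hbw] at this
      simp [this.symm, hb0]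
    have hcard := Finset.card_le_card hsub
    have : (Z.filter (fun b => df b = w)).card ≤ zc w := hcard
    simp only [hg]
    omega
  have hT2 : 2 * P2.card ≤ 2 * ∑ w ∈ P2, g w := by
    have : P2.card ≤ ∑ w ∈ P2, g w := by
      rw [Finset.card_eq_sum_ones P2]
      refine Finset.sum_le_sum ?_
      intro w hw
      have : 2 ≤ f w := (Finset.mem_filter.mp hw).2
      simp only [hg]; omega
    omega
  have hT3 : 2 * K2.card ≤ 2 * ∑ w ∈ K2.image vx, g w := by
    have hcard : (K2.image vx).card = K2.card := by
      refine Finset.card_image_of_injOn ?_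
      intro x hx y hy h
      exact hvxinj x (Finset.mem_of_mem_filter x hx) y (Finset.mem_of_mem_filter y hy) h
    have : K2.card ≤ ∑ w ∈ K2.image vx, g w := by
      rw [← hcard, Finset.card_eq_sum_ones (K2.image vx)]
      refine Finset.sum_le_sum ?_
      intro w hw
      obtain ⟨x, hx, hxw⟩ := Finset.mem_image.mp hw
      have : 2 ≤ f (vx x) := (Finset.mem_filter.mp hx).2
      rw [hxw] at this
      simp only [hg]; omega
    omega
  -- disjointness of the three credit sets
  have hdisj12 : Disjoint (Z.image df) P2 := by
    rw [Finset.disjoint_left]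
    intro w hw hwP
    obtain ⟨a, ha, hda⟩ := Finset.mem_image.mp hw
    have ha0 : f a = 0 := (Finset.mem_filter.mp ha).2
    have haNB : a ∈ NB := (Finset.mem_filter.mp ha).1
    have hadj := (hdf a ha0).1
    rw [hda] at hadj
    exact hnbr_nbr a w haNB (Finset.mem_of_mem_filter w (Finset.mem_of_mem_filter w hwP)) hadj
  have hdisj13 : Disjoint (Z.image df) (K2.image vx) := by
    rw [Finset.disjoint_left]
    intro w hw hwK
    obtain ⟨a, ha, hda⟩ := Finset.mem_image.mp hw
    obtain ⟨x, hx, hxw⟩ := Finset.mem_image.mp hwK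
    have hxK : x ∈ K := Finset.mem_of_mem_filter x hx
    have ha0 : f a = 0 := (Finset.mem_filter.mp ha).2
    have haNB : a ∈ NB := (Finset.mem_filter.mp ha).1
    obtain ⟨hne, hadj, hprop⟩ := hvx x (hKFo x hxK)
    have hdfadj := (hdf a ha0).1
    rw [hda] at hdfadj
    have hax : a ≠ x := by
      intro h; rw [h] at ha0; have := hK1f x hxK; omega
    rw [hxw] at hne hadj
    exact no_c4 hac (Ne.symm hne) hax ((hNBmem a).mp haNB) hdfadj.symm
      ((hNBmem x).mp (hKNB x hxK)) hadj.symm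
  have hdisj23 : Disjoint P2 (K2.image vx) := by
    rw [Finset.disjoint_left]
    intro w hwP hwK
    obtain ⟨x, hx, hxw⟩ := Finset.mem_image.mp hwK
    have hxK : x ∈ K := Finset.mem_of_mem_filter x hx
    have := hvxNB x hxK
    rw [hxw] at this
    exact this (Finset.mem_of_mem_filter w (Finset.mem_of_mem_filter w hwP))
  have hTS : (Z.image df) ∪ P2 ∪ (K2.image vx) ⊆ S := by
    intro w hw
    rw [hSmem]
    rcases Finset.mem_union.mp hw with hw | hw
    · rcases Finset.mem_union.mp hw with hw | hw
      · obtain ⟨a, ha, hda⟩ := Finset.mem_image.mp hw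
        have ha0 : f a = 0 := (Finset.mem_filter.mp ha).2
        have := hdf2 a ha0
        rw [hda] at this; omega
      · have : 2 ≤ f w := (Finset.mem_filter.mp hw).2; omega
    · obtain ⟨x, hx, hxw⟩ := Finset.mem_image.mp hw
      have : 2 ≤ f (vx x) := (Finset.mem_filter.mp hx).2
      rw [hxw] at this; omega
  have hA : Z.card + 2 * P2.card + 2 * K2.card ≤ 2 * ∑ v ∈ S, g v := by
    have hsum1 : ∑ w ∈ (Z.image df) ∪ P2 ∪ (K2.image vx), g w =
        ∑ w ∈ Z.image df, g w + ∑ w ∈ P2, g w + ∑ w ∈ K2.image vx, g w := by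
      rw [Finset.sum_union (by
        rw [Finset.disjoint_union_left]; exact ⟨hdisj13, hdisj23⟩),
        Finset.sum_union hdisj12]
    have hle : ∑ w ∈ (Z.image df) ∪ P2 ∪ (K2.image vx), g w ≤ ∑ v ∈ S, g v :=
      Finset.sum_le_sum_of_subset hTS
    omega
  -- choice of E
  have hE : ∃ E : Finset V, E ⊆ P1 \ K ∧ E.card ≤ 1 ∧ ((P2 ∪ K) ∪ E).Nonempty ∧
      (f u = 0 → E = ∅) := by
    by_cases hPK : (P2 ∪ K).Nonempty
    · exact ⟨∅, by simp, by simp, by simpa using hPK, fun _ => rfl⟩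
    · have hP2e : P2 = ∅ := by
        rw [Finset.not_nonempty_iff_eq_empty, Finset.union_eq_empty] at hPK
        exact hPK.1
      have hKe : K = ∅ := by
        rw [Finset.not_nonempty_iff_eq_empty, Finset.union_eq_empty] at hPK
        exact hPK.2
      have hfu : 0 < f u := by
        by_contra h
        have hu0 : f u = 0 := by omega
        have h2 := hdf2 u hu0
        have h1 := (hdf u hu0).1
        have : df u ∈ P2 := by
          rw [hP2, hP]
          simp only [Finset.mem_filter]
          exact ⟨⟨(hNBmem _).mpr h1, by omega⟩, h2⟩
        rw [hP2e] at this
        exact absurd this (Finset.notMem_empty _)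
      obtain ⟨x0, hadj0, hfx0⟩ := hpos u hfu
      have hx0P : x0 ∈ P := by
        rw [hP]; simp only [Finset.mem_filter]; exact ⟨(hNBmem _).mpr hadj0, hfx0⟩
      have hfx01 : f x0 = 1 := by
        by_contra h
        have : x0 ∈ P2 := by
          rw [hP2]; simp only [Finset.mem_filter]; exact ⟨hx0P, by omega⟩
        rw [hP2e] at this
        exact absurd this (Finset.notMem_empty _)
      have hx0 : x0 ∈ P1 \ K := by
        rw [Finset.mem_sdiff, hKe]
        refine ⟨?_, Finset.notMem_empty _⟩
        rw [hP1]; simp only [Finset.mem_filter]; exact ⟨hx0P, hfx01⟩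
      refine ⟨{x0}, by simpa using hx0, by simp, ⟨x0, by simp⟩, fun h => ?_⟩
      · omega
  obtain ⟨E, hE1, hE2, hE3, hE4⟩ := hE
  set R : Finset V := (P1 \ K) \ E with hR
  set D : Finset V := (S ∪ {u}) \ (R ∪ W1) with hD
  -- values on removed sets
  have hRW1f : ∀ x ∈ R ∪ W1, f x = 1 := by
    intro x hx
    rcases Finset.mem_union.mp hx with hx | hx
    · have : x ∈ P1 := (Finset.mem_sdiff.mp (Finset.mem_sdiff.mp hx).1).1
      exact (Finset.mem_filter.mp this).2
    · obtain ⟨y, hy, hyx⟩ := Finset.mem_image.mp hx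
      have hyK : y ∈ K := (Finset.mem_sdiff.mp hy).1
      have h1 := hvxS y hyK
      have h2 : ¬ 2 ≤ f (vx y) := by
        intro h
        have : y ∈ K2 := by
          rw [hK2]; simp only [Finset.mem_filter]; exact ⟨hyK, h⟩
        exact (Finset.mem_sdiff.mp hy).2 this
      rw [← hyx]; omega
  have hRNB : ∀ x ∈ R, x ∈ NB := by
    intro x hx
    have : x ∈ P1 := (Finset.mem_sdiff.mp (Finset.mem_sdiff.mp hx).1).1
    exact Finset.mem_of_mem_filter x (Finset.mem_of_mem_filter x this)
  have hW1NB : ∀ x ∈ W1, x ∉ NB := by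
    intro x hx
    obtain ⟨y, hy, hyx⟩ := Finset.mem_image.mp hx
    rw [← hyx]
    exact hvxNB y (Finset.mem_sdiff.mp hy).1
  have huD : u ∈ D := by
    rw [hD, Finset.mem_sdiff]
    constructor
    · simp
    · intro h
      rcases Finset.mem_union.mp h with h | h
      · exact huNB (hRNB u h)
      · obtain ⟨y, hy, hyx⟩ := Finset.mem_image.mp h
        exact (hvx y (hKFo y (Finset.mem_sdiff.mp hy).1)).1 hyx
  have hD2 : ∀ w, 2 ≤ f w → w ∈ D := by
    intro w hw
    rw [hD, Finset.mem_sdiff]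
    constructor
    · refine Finset.mem_union_left _ ?_
      rw [hSmem]; omega
    · intro h
      have := hRW1f w h; omega
  have hPkeep : ∀ x, x ∈ P2 ∪ K → x ∈ D := by
    intro x hx
    rcases Finset.mem_union.mp hx with hx | hx
    · exact hD2 x (Finset.mem_filter.mp hx).2
    · rw [hD, Finset.mem_sdiff]
      constructor
      · refine Finset.mem_union_left _ ?_
        rw [hSmem]
        have := hK1f x hx; omega
      · intro h
        rcases Finset.mem_union.mp h with h | h
        · exact (Finset.mem_sdiff.mp (Finset.mem_sdiff.mp h).1).2 hx
        · exact hW1NB x h (hKNB x hx)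
  -- D is a total dominating set
  have hTDS : IsTDS G D := by
    intro v
    by_cases hv0 : f v = 0
    · exact ⟨df v, hD2 _ (hdf2 v hv0), (hdf v hv0).1⟩
    · by_cases hvu : v = u
      · obtain ⟨x, hx⟩ := hE3
        rcases Finset.mem_union.mp hx with hx | hx
        · refine ⟨x, hPkeep x hx, ?_⟩
          rw [hvu]
          rcases Finset.mem_union.mp hx with hx | hx
          · exact (hNBmem x).mp (Finset.mem_of_mem_filter x (Finset.mem_of_mem_filter x hx))
          · exact (hNBmem x).mp (hKNB x hx)
        · have hxPK : x ∈ P1 \ K := hE1 hx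
          refine ⟨x, ?_, ?_⟩
          · rw [hD, Finset.mem_sdiff]
            constructor
            · refine Finset.mem_union_left _ ?_
              rw [hSmem]
              have : f x = 1 := (Finset.mem_filter.mp (Finset.mem_sdiff.mp hxPK).1).2
              omega
            · intro h
              rcases Finset.mem_union.mp h with h | h
              · exact (Finset.mem_sdiff.mp h).2 hx
              · exact hW1NB x h (Finset.mem_of_mem_filter x
                  (Finset.mem_of_mem_filter x (Finset.mem_sdiff.mp hxPK).1))
          · rw [hvu]
            exact (hNBmem x).mp (Finset.mem_of_mem_filter x
              (Finset.mem_of_mem_filter x (Finset.mem_sdiff.mp hxPK).1))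
      · by_cases hvadj : G.Adj v u
        · exact ⟨u, huD, hvadj⟩
        · by_cases hgood : ∃ s, G.Adj v s ∧ 0 < f s ∧ s ∉ R ∪ W1
          · obtain ⟨s, hs1, hs2, hs3⟩ := hgood
            refine ⟨s, ?_, hs1⟩
            rw [hD, Finset.mem_sdiff]
            exact ⟨Finset.mem_union_left _ ((hSmem s).mpr hs2), hs3⟩
          · push_neg at hgood
            -- every positive neighbor of v is in R (not W1)
            have hallR : ∀ s, G.Adj v s → 0 < f s → s ∈ R := by
              intro s hs1 hs2
              have := hgood s hs1 hs2
              rcases Finset.mem_union.mp this with h | h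
              · exact h
              · exfalso
                obtain ⟨y, hy, hyx⟩ := Finset.mem_image.mp h
                have hyK : y ∈ K := (Finset.mem_sdiff.mp hy).1
                obtain ⟨hne, hadj, hprop⟩ := hvx y (hKFo y hyK)
                rw [hyx] at hprop
                have hvy : v = y := hprop v hs1.symm (by omega)
                rw [hvy] at hvadj
                exact hvadj ((hNBmem y).mp (hKNB y hyK)).symm
            obtain ⟨t, hadjt, hft⟩ := hpos v (by omega)
            have htR : t ∈ R := hallR t hadjt hft
            have htK : Fo t := by
              refine ⟨v, hvu, hadjt.symm, ?_⟩
              intro w hw1 hw2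
              have hwR := hallR w hw1 hw2
              exact hadj_two v hvu w t (hRNB w hwR) (hRNB t htR) hw1 hadjt
            have htP1 : t ∈ P1 := (Finset.mem_sdiff.mp (Finset.mem_sdiff.mp htR).1).1
            have : t ∈ K := by
              rw [hK]; simp only [Finset.mem_filter]; exact ⟨htP1, htK⟩
            exact absurd this (Finset.mem_sdiff.mp (Finset.mem_sdiff.mp htR).1).2
  -- cardinalities
  have hW1card : W1.card = K1.card := by
    rw [hW1]
    refine Finset.card_image_of_injOn ?_
    intro x hx y hy h
    exact hvxinj x (Finset.mem_sdiff.mp hx).1 y (Finset.mem_sdiff.mp hy).1 h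
  have hK2sub : K2 ⊆ K := Finset.filter_subset _ _
  have hK1card : K1.card = K.card - K2.card := by
    rw [hK1]; exact Finset.card_sdiff_of_subset hK2sub
  have hK2le : K2.card ≤ K.card := Finset.card_le_card hK2sub
  have hKP1 : K ⊆ P1 := by rw [hK]; exact Finset.filter_subset _ _
  have hKle : K.card ≤ P1.card := Finset.card_le_card hKP1
  have hP1K : (P1 \ K).card = P1.card - K.card := Finset.card_sdiff_of_subset hKP1
  have hEle : E.card ≤ (P1 \ K).card := Finset.card_le_card hE1
  have hRcard : R.card = (P1 \ K).card - E.card := by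
    rw [hR]; exact Finset.card_sdiff_of_subset hE1
  have hdisjRW : Disjoint R W1 := by
    rw [Finset.disjoint_left]
    intro x hx hx'
    exact hW1NB x hx' (hRNB x hx)
  have hsubRW : R ∪ W1 ⊆ S ∪ {u} := by
    intro x hx
    refine Finset.mem_union_left _ ?_
    rw [hSmem]
    have := hRW1f x hx
    omega
  have hDcard : D.card = (S ∪ {u}).card - (R.card + W1.card) := by
    rw [hD, Finset.card_sdiff_of_subset hsubRW, Finset.card_union_of_disjoint hdisjRW]
  have hRWle : R.card + W1.card ≤ (S ∪ {u}).card := by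
    rw [← Finset.card_union_of_disjoint hdisjRW]
    exact Finset.card_le_card hsubRW
  -- partitions of the neighborhood
  have hZP : Z.card + P.card = NB.card := by
    have he : NB.filter (fun w => 0 < f w) = NB.filter (fun w => ¬ f w = 0) := by
      refine Finset.filter_congr ?_
      intro w _
      omega
    rw [hZ, hP, he]
    exact Finset.card_filter_add_card_filter_not (p := fun w => f w = 0)
  have hP12 : P2.card + P1.card = P.card := by
    have he : P.filter (fun w => f w = 1) = P.filter (fun w => ¬ 2 ≤ f w) := by
      refine Finset.filter_congr ?_
      intro w hw
      have : 0 < f w := (Finset.mem_filter.mp hw).2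
      omega
    rw [hP2, hP1, he]
    exact Finset.card_filter_add_card_filter_not (p := fun w => 2 ≤ f w)
  have hmaxdeg : maxDeg G = NB.card := by
    have : degN G u = NB.card := by
      rw [degN, ncard_adj, hNB]
    rw [maxDeg, hu, this]
  -- the sum of f
  have hsumf : ∑ v, f v = S.card + ∑ v ∈ S, g v := by
    have h1 := Finset.sum_filter_add_sum_filter_not univ (fun v => 0 < f v) f
    have h2 : ∑ v ∈ univ.filter (fun v => ¬ 0 < f v), f v = 0 := by
      refine Finset.sum_eq_zero ?_
      intro v hv
      have := (Finset.mem_filter.mp hv).2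
      omega
    have h3 : ∑ v ∈ S, f v = ∑ v ∈ S, (g v + 1) := by
      refine Finset.sum_congr rfl ?_
      intro v hv
      have := (hSmem v).mp hv
      simp only [hg]
      omega
    have h4 : ∑ v ∈ S, f v = S.card + ∑ v ∈ S, g v := by
      rw [h3, Finset.sum_add_distrib, Finset.sum_const, smul_eq_mul, mul_one]
      omega
    rw [← h1, h2, add_zero, ← hS, h4]
  -- f u = 0 implies P2 nonempty
  have hP2pos : f u = 0 → 0 < P2.card := by
    intro hu0
    have h2 := hdf2 u hu0
    have h1 := (hdf u hu0).1
    have : df u ∈ P2 := by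
      rw [hP2, hP]
      simp only [Finset.mem_filter]
      exact ⟨⟨(hNBmem _).mpr h1, by omega⟩, h2⟩
    exact Finset.card_pos.mpr ⟨df u, this⟩
  refine ⟨D, hTDS, ?_⟩
  by_cases hu0 : f u = 0
  · have hc2 : (S ∪ {u}).card = S.card + 1 := by
      have : u ∉ S := by rw [hSmem]; omega
      rw [Finset.card_union_of_disjoint (by simpa using this)]
      simp
    have hE0 : E.card = 0 := by rw [hE4 hu0]; simp
    have hp2 := hP2pos hu0
    omega
  · have hc2 : (S ∪ {u}).card = S.card := by
      have : u ∈ S := by rw [hSmem]; omega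
      congr 1
      rw [Finset.union_eq_left]
      simpa using this
    omega

theorem stmt17 (G : SimpleGraph V) (ht : G.IsTree) (hn : 2 ≤ Fintype.card V) :
    td G + maxDeg G / 2 ≤ tsrd G := by
  classical
  have hne : {k | ∃ f : V → ℕ, IsTSRDF G f ∧ ∑ v, f v = k}.Nonempty := by
    refine ⟨∑ _v : V, (1 : ℕ), (fun _ => 1), ⟨⟨fun v => ?_, fun v h => ?_, fun v _ => ?_⟩, rfl⟩⟩
    · show (1 : ℕ) ≤ _
      omega
    · exact absurd h one_ne_zero
    · obtain ⟨w, hw⟩ := exists_adj ht.isConnected hn v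
      exact ⟨w, hw, one_pos⟩
  obtain ⟨f, hf, hsum⟩ := Nat.sInf_mem hne
  obtain ⟨D, hD, hcard⟩ := main G ht hn f hf
  have h1 : td G ≤ D.card := Nat.sInf_le ⟨D, hD, rfl⟩
  have h2 : tsrd G = ∑ v, f v := by
    unfold tsrd
    exact hsum.symm
  calc td G + maxDeg G / 2 ≤ D.card + maxDeg G / 2 := Nat.add_le_add_right h1 _
    _ ≤ ∑ v, f v := hcard
    _ = tsrd G := h2.symm
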